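/- Let A', B' be commuting bounded positive operators on a Hilbert space with A' + B' = I. For each n ≥ 1 define fₙ(t) = n t(1−t)/(n t + (1−t)) on [0,1] (with fₙ(0)=0). Then the operators fₙ(A') = (nA') : B' converge strongly as n → ∞ to s(A')·B', where s(A') is the support projection of A' (the spectral projection χ_{(0,1]}(A')). Equivalently, lim_n (nA' : B') = s(A')(I − A'). -/

import Mathlib

open Filter Topology
open scoped Pointwise InnerProductSpace

section Aux

variable {H : Type*} [NormedAddCommGroup H] [InnerProductSpace ℂ H] [CompleteSpace H]

private lemma aux_spec (A' : H →L[ℂ] H) (hA : A'.IsPositive) (hA1 : (1 - A').IsPositive) :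
    spectrum ℝ A' ⊆ Set.Icc (0 : ℝ) 1 := by
  intro t ht
  refine ⟨spectrum_nonneg_of_nonneg ((ContinuousLinearMap.nonneg_iff_isPositive A').mpr hA) ht, ?_⟩
  have h1 : (1 : ℝ) - t ∈ ({(1:ℝ)} : Set ℝ) - spectrum ℝ A' := Set.sub_mem_sub rfl ht
  rw [spectrum.singleton_sub_eq] at h1
  have h2 : algebraMap ℝ (H →L[ℂ] H) 1 - A' = 1 - A' := by rw [map_one]
  rw [h2] at h1
  have := spectrum_nonneg_of_nonneg
    ((ContinuousLinearMap.nonneg_iff_isPositive (1 - A')).mpr hA1) h1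
  linarith

private lemma aux_Dpos {t : ℝ} (ht : t ∈ Set.Icc (0:ℝ) 1) (k : ℕ) :
    (0 : ℝ) < (k + 1 : ℝ) * t + (1 - t) := by
  obtain ⟨h0, h1⟩ := ht
  nlinarith [mul_nonneg (Nat.cast_nonneg (α := ℝ) k) h0]

private lemma aux_f_mem {t : ℝ} (ht : t ∈ Set.Icc (0:ℝ) 1) (k : ℕ) :
    ((k + 1 : ℝ) * t * (1 - t)) / ((k + 1 : ℝ) * t + (1 - t)) ∈ Set.Icc (0:ℝ) 1 := by
  obtain ⟨h0, h1⟩ := ht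
  have hD := aux_Dpos ⟨h0, h1⟩ k
  constructor
  · apply div_nonneg _ hD.le
    have hk : (0:ℝ) ≤ (k + 1 : ℝ) := by positivity
    exact mul_nonneg (mul_nonneg hk h0) (by linarith)
  · rw [div_le_one hD]
    nlinarith [mul_nonneg (show (0:ℝ) ≤ (k+1:ℝ) by positivity) h0]

private lemma aux_g_bound {t : ℝ} (ht : t ∈ Set.Icc (0:ℝ) 1) (k : ℕ) :
    |((k + 1 : ℝ) * t * (1 - t)) / ((k + 1 : ℝ) * t + (1 - t)) * t - (1 - t) * t|
      ≤ 1 / (k + 1 : ℝ) := by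
  obtain ⟨h0, h1⟩ := ht
  have hD := aux_Dpos ⟨h0, h1⟩ k
  have hk : (0:ℝ) < (k + 1 : ℝ) := by positivity
  have heq : ((k + 1 : ℝ) * t * (1 - t)) / ((k + 1 : ℝ) * t + (1 - t)) * t - (1 - t) * t
      = -(t * (1 - t)^2) / ((k + 1 : ℝ) * t + (1 - t)) := by
    field_simp
    ring
  rw [heq, neg_div, abs_neg, abs_of_nonneg (by positivity), div_le_div_iff₀ hD hk]
  nlinarith [mul_nonneg (mul_nonneg hk.le (sq_nonneg t)) (show (0:ℝ) ≤ 2 - t by linarith),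
    mul_nonneg (mul_nonneg hk.le h0) (show (0:ℝ) ≤ 1 - t by linarith)]

private lemma aux_key {c e : ℝ} (hc : 0 ≤ c) :
    e / (2 * (1 + c)) + c * (e / (2 * (1 + c))) = e / 2 := by
  have h : 1 + c ≠ 0 := by positivity
  field_simp

end Aux

set_option maxHeartbeats 1000000 in
/-- let `A', B'` be commuting bounded positive operators with `A' + B' = I`,
and for `n ≥ 1` let `fₙ(t) = n t(1−t)/(n t + (1−t))`, so that `fₙ(A') = (nA') : B'` is the
parallel sum. Then `fₙ(A')` converges strongly to `s(A')·B' = s(A')(I − A')`, where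
`s(A')` is the support projection of `A'` (the orthogonal projection with kernel
`ker A'`, i.e. the spectral projection `χ_{(0,1]}(A')`). -/
theorem parallel_sum_limit_support_projection {H : Type*} [NormedAddCommGroup H]
    [InnerProductSpace ℂ H] [CompleteSpace H]
    (A' B' S : H →L[ℂ] H) (hA : A'.IsPositive) (hB : B'.IsPositive)
    (hcomm : A' * B' = B' * A') (hsum : A' + B' = 1)
    (hSsa : IsSelfAdjoint S) (hSidem : IsIdempotentElem S)
    (hSker : LinearMap.ker (S : H →ₗ[ℂ] H) = LinearMap.ker (A' : H →ₗ[ℂ] H)) :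
    S * B' = S * (1 - A') ∧
      ∀ ξ : H, Tendsto (fun k : ℕ =>
          (cfc (fun t : ℝ => ((k + 1 : ℝ) * t * (1 - t)) / ((k + 1 : ℝ) * t + (1 - t))) A') ξ)
        atTop (𝓝 ((S * B') ξ)) := by
  have hB' : B' = 1 - A' := eq_sub_of_add_eq' hsum
  refine ⟨by rw [hB'], ?_⟩
  have hsaA : IsSelfAdjoint A' := hA.isSelfAdjoint
  have hsymA : ∀ x y : H, ⟪A' x, y⟫_ℂ = ⟪x, A' y⟫_ℂ := fun x y =>
    ContinuousLinearMap.isSelfAdjoint_iff_isSymmetric.mp hsaA x y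
  have hsymS : ∀ x y : H, ⟪S x, y⟫_ℂ = ⟪x, S y⟫_ℂ := fun x y =>
    ContinuousLinearMap.isSelfAdjoint_iff_isSymmetric.mp hSsa x y
  have hspec : spectrum ℝ A' ⊆ Set.Icc (0:ℝ) 1 := aux_spec A' hA (hB' ▸ hB)
  -- continuity facts
  have hDne : ∀ (k : ℕ), ∀ t ∈ spectrum ℝ A', ((k + 1 : ℝ) * t + (1 - t)) ≠ 0 :=
    fun k t ht => (aux_Dpos (hspec ht) k).ne'
  have hcontf : ∀ k : ℕ, ContinuousOn
      (fun t : ℝ => ((k + 1 : ℝ) * t * (1 - t)) / ((k + 1 : ℝ) * t + (1 - t)))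
      (spectrum ℝ A') :=
    fun k => ContinuousOn.div (by fun_prop) (by fun_prop) (hDne k)
  have hconth : ∀ k : ℕ, ContinuousOn
      (fun t : ℝ => ((k + 1 : ℝ) * (1 - t)) / ((k + 1 : ℝ) * t + (1 - t)))
      (spectrum ℝ A') :=
    fun k => ContinuousOn.div (by fun_prop) (by fun_prop) (hDne k)
  -- factorization : cfc f = cfc h * A'
  have hfactor : ∀ k : ℕ,
      cfc (fun t : ℝ => ((k + 1 : ℝ) * t * (1 - t)) / ((k + 1 : ℝ) * t + (1 - t))) A'
        = cfc (fun t : ℝ => ((k + 1 : ℝ) * (1 - t)) / ((k + 1 : ℝ) * t + (1 - t))) A' * A' := by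
    intro k
    have hfun : (fun t : ℝ => ((k + 1 : ℝ) * t * (1 - t)) / ((k + 1 : ℝ) * t + (1 - t)))
        = fun t : ℝ => (((k + 1 : ℝ) * (1 - t)) / ((k + 1 : ℝ) * t + (1 - t))) * t := by
      funext t; ring
    rw [hfun, cfc_mul _ _ A' (hconth k) (by fun_prop : ContinuousOn (fun t : ℝ => t) (spectrum ℝ A')), cfc_id' ℝ A']
  -- norm bounds
  have hnorm1 : ∀ k : ℕ,
      ‖cfc (fun t : ℝ => ((k + 1 : ℝ) * t * (1 - t)) / ((k + 1 : ℝ) * t + (1 - t))) A'‖ ≤ 1 := by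
    intro k
    refine norm_cfc_le zero_le_one fun t ht => ?_
    obtain ⟨hl, hr⟩ := aux_f_mem (hspec ht) k
    rw [Real.norm_eq_abs, abs_of_nonneg hl]
    exact hr
  have hnorm2 : ∀ k : ℕ,
      ‖cfc (fun t : ℝ => ((k + 1 : ℝ) * t * (1 - t)) / ((k + 1 : ℝ) * t + (1 - t))) A' * A'
        - (1 - A') * A'‖ ≤ 1 / (k + 1 : ℝ) := by
    intro k
    have e1 : cfc (fun t : ℝ => ((k + 1 : ℝ) * t * (1 - t)) / ((k + 1 : ℝ) * t + (1 - t))) A' * A'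
        = cfc (fun t : ℝ =>
            (((k + 1 : ℝ) * t * (1 - t)) / ((k + 1 : ℝ) * t + (1 - t))) * t) A' := by
      rw [cfc_mul _ _ A' (hcontf k) (by fun_prop : ContinuousOn (fun t : ℝ => t) (spectrum ℝ A')), cfc_id' ℝ A']
    have e2 : (1 - A') * A' = cfc (fun t : ℝ => (1 - t) * t) A' := by
      rw [cfc_mul _ _ A' (by fun_prop) (by fun_prop : ContinuousOn (fun t : ℝ => t) (spectrum ℝ A')), cfc_id' ℝ A',
        cfc_sub (fun _ : ℝ => (1:ℝ)) (fun t : ℝ => t) A' (by fun_prop) (by fun_prop),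
        cfc_const_one ℝ A', cfc_id' ℝ A']
    rw [e1, e2, ← cfc_sub (fun t : ℝ => (((k + 1 : ℝ) * t * (1 - t)) / ((k + 1 : ℝ) * t + (1 - t))) * t)
      (fun t : ℝ => (1 - t) * t) A'
      ((hcontf k).mul (by fun_prop : ContinuousOn (fun t : ℝ => t) (spectrum ℝ A'))) (by fun_prop)]
    refine norm_cfc_le (by positivity) fun t ht => ?_
    rw [Real.norm_eq_abs]
    exact aux_g_bound (hspec ht) k
  -- kernel facts
  intro ξ
  have hSS : ∀ x : H, S (S x) = S x := fun x => by
    have h := hSidem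
    rw [IsIdempotentElem] at h
    calc S (S x) = (S * S) x := rfl
      _ = S x := by rw [h]
  have hkerS : ∀ x : H, S x = 0 ↔ A' x = 0 := by
    intro x
    constructor
    · intro hx
      have : x ∈ LinearMap.ker (S : H →ₗ[ℂ] H) := by simpa using hx
      rw [hSker] at this
      simpa using this
    · intro hx
      have : x ∈ LinearMap.ker (A' : H →ₗ[ℂ] H) := by simpa using hx
      rw [← hSker] at this
      simpa using this
  -- S fixes range of A'
  have hfix : ∀ x : H, S (A' x) = A' x := by
    intro x
    have hu : S (A' x - S (A' x)) = 0 := by rw [map_sub, hSS, sub_self]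
    have huA : A' (A' x - S (A' x)) = 0 := (hkerS _).mp hu
    have horth : ∀ w : H, A' w = 0 → ⟪A' x - S (A' x), w⟫_ℂ = 0 := by
      intro w hw
      have h1 : ⟪A' x, w⟫_ℂ = 0 := by rw [hsymA x w, hw, inner_zero_right]
      have h2 : ⟪S (A' x), w⟫_ℂ = 0 := by
        rw [hsymS (A' x) w, (hkerS w).mpr hw, inner_zero_right]
      rw [inner_sub_left, h1, h2, sub_zero]
    have : ⟪A' x - S (A' x), A' x - S (A' x)⟫_ℂ = 0 := horth _ huA
    have := inner_self_eq_zero.mp this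
    rw [sub_eq_zero] at this
    exact this.symm
  -- closure fact
  set R : Submodule ℂ H := LinearMap.range (A' : H →ₗ[ℂ] H) with hR
  have hRorth : Rᗮ ≤ LinearMap.ker (A' : H →ₗ[ℂ] H) := by
    intro w hw
    have hin : ∀ x : H, ⟪x, A' w⟫_ℂ = 0 := by
      intro x
      rw [← hsymA x w]
      exact hw (A' x) ⟨x, rfl⟩
    have : A' w = 0 := by
      have := hin (A' w)
      rwa [inner_self_eq_zero] at this
    simpa using this
  have hSmem : S ξ ∈ closure (R : Set H) := by
    have h1 : S ξ ∈ (LinearMap.ker (A' : H →ₗ[ℂ] H))ᗮ := by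
      rw [Submodule.mem_orthogonal']
      intro w hw
      have hw' : A' w = 0 := by simpa using hw
      rw [hsymS ξ w, (hkerS w).mpr hw', inner_zero_right]
    have h2 : (LinearMap.ker (A' : H →ₗ[ℂ] H))ᗮ ≤ Rᗮᗮ := Submodule.orthogonal_le hRorth
    have h3 : Rᗮᗮ = R.topologicalClosure := R.orthogonal_orthogonal_eq_closure
    have := h3 ▸ h2 h1
    have h4 : S ξ ∈ ((R.topologicalClosure : Submodule ℂ H) : Set H) := this
    rw [Submodule.topologicalClosure_coe] at h4
    exact h4
  -- reduce to ξ₁ := S ξ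
  have happly : ∀ k : ℕ,
      cfc (fun t : ℝ => ((k + 1 : ℝ) * t * (1 - t)) / ((k + 1 : ℝ) * t + (1 - t))) A' ξ
        = cfc (fun t : ℝ => ((k + 1 : ℝ) * t * (1 - t)) / ((k + 1 : ℝ) * t + (1 - t))) A' (S ξ)
      := by
    intro k
    have hker : A' (ξ - S ξ) = 0 := by
      apply (hkerS _).mp
      rw [map_sub, hSS, sub_self]
    have h0 : cfc (fun t : ℝ => ((k + 1 : ℝ) * t * (1 - t)) / ((k + 1 : ℝ) * t + (1 - t))) A'
        (ξ - S ξ) = 0 := by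
      rw [hfactor k, ContinuousLinearMap.mul_apply, hker, map_zero]
    have := map_sub (cfc (fun t : ℝ =>
      ((k + 1 : ℝ) * t * (1 - t)) / ((k + 1 : ℝ) * t + (1 - t))) A') ξ (S ξ)
    rw [h0] at this
    exact sub_eq_zero.mp this.symm
  have htarget : (S * B') ξ = (1 - A') (S ξ) := by
    have hker : A' (ξ - S ξ) = 0 := (hkerS _).mp (by rw [map_sub, hSS, sub_self])
    have hAξ : A' ξ = A' (S ξ) := by
      have h' := map_sub A' ξ (S ξ)
      rw [hker] at h'
      exact sub_eq_zero.mp h'.symm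
    rw [hB']
    have h1 : (S * (1 - A')) ξ = S ξ - S (A' ξ) := by
      simp [ContinuousLinearMap.mul_apply, ContinuousLinearMap.sub_apply,
        ContinuousLinearMap.one_apply, map_sub]
    rw [h1, hAξ, hfix (S ξ)]
    simp [ContinuousLinearMap.sub_apply, ContinuousLinearMap.one_apply]
  have hfunext : (fun k : ℕ =>
      (cfc (fun t : ℝ => ((k + 1 : ℝ) * t * (1 - t)) / ((k + 1 : ℝ) * t + (1 - t))) A') ξ)
      = fun k : ℕ =>
      (cfc (fun t : ℝ => ((k + 1 : ℝ) * t * (1 - t)) / ((k + 1 : ℝ) * t + (1 - t))) A') (S ξ) :=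
    funext happly
  rw [htarget, hfunext, Metric.tendsto_atTop]
  intro ε hε
  have hCpos : (0:ℝ) < 1 + ‖(1 : H →L[ℂ] H) - A'‖ := by positivity
  obtain ⟨b, hbR, hbd⟩ := Metric.mem_closure_iff.mp hSmem
    (ε / (2 * (1 + ‖(1 : H →L[ℂ] H) - A'‖))) (by positivity)
  obtain ⟨η, hη⟩ := hbR
  have hη' : A' η = b := hη
  have hdist : ‖S ξ - A' η‖ < ε / (2 * (1 + ‖(1 : H →L[ℂ] H) - A'‖)) := by
    rw [dist_eq_norm, ← hη'] at hbd
    exact hbd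
  obtain ⟨N, hN⟩ := exists_nat_gt (2 * ‖η‖ / ε)
  refine ⟨N, fun k hk => ?_⟩
  have hdecomp :
      cfc (fun t : ℝ => ((k + 1 : ℝ) * t * (1 - t)) / ((k + 1 : ℝ) * t + (1 - t))) A' (S ξ)
        - (1 - A') (S ξ)
      = cfc (fun t : ℝ => ((k + 1 : ℝ) * t * (1 - t)) / ((k + 1 : ℝ) * t + (1 - t))) A'
          (S ξ - A' η)
        + (cfc (fun t : ℝ => ((k + 1 : ℝ) * t * (1 - t)) / ((k + 1 : ℝ) * t + (1 - t))) A' * A'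
            - (1 - A') * A') η
        + (1 - A') (A' η - S ξ) := by
    simp only [map_sub, ContinuousLinearMap.sub_apply, ContinuousLinearMap.mul_apply]
    abel
  rw [dist_eq_norm, hdecomp]
  have n1 : ‖cfc (fun t : ℝ => ((k + 1 : ℝ) * t * (1 - t)) / ((k + 1 : ℝ) * t + (1 - t))) A'
      (S ξ - A' η)‖ ≤ ε / (2 * (1 + ‖(1 : H →L[ℂ] H) - A'‖)) := by
    calc _ ≤ ‖cfc (fun t : ℝ => ((k + 1 : ℝ) * t * (1 - t)) / ((k + 1 : ℝ) * t + (1 - t))) A'‖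
          * ‖S ξ - A' η‖ := ContinuousLinearMap.le_opNorm _ _
      _ ≤ 1 * (ε / (2 * (1 + ‖(1 : H →L[ℂ] H) - A'‖))) :=
          mul_le_mul (hnorm1 k) hdist.le (norm_nonneg _) zero_le_one
      _ = _ := one_mul _
  have n2 : ‖(cfc (fun t : ℝ => ((k + 1 : ℝ) * t * (1 - t)) / ((k + 1 : ℝ) * t + (1 - t))) A' * A'
      - (1 - A') * A') η‖ ≤ (1 / ((k:ℝ) + 1)) * ‖η‖ :=
    le_trans (ContinuousLinearMap.le_opNorm _ _)
      (mul_le_mul_of_nonneg_right (hnorm2 k) (norm_nonneg _))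
  have n3 : ‖(1 - A') (A' η - S ξ)‖
      ≤ ‖(1 : H →L[ℂ] H) - A'‖ * (ε / (2 * (1 + ‖(1 : H →L[ℂ] H) - A'‖))) := by
    calc _ ≤ ‖(1 : H →L[ℂ] H) - A'‖ * ‖A' η - S ξ‖ := ContinuousLinearMap.le_opNorm _ _
      _ ≤ _ := mul_le_mul_of_nonneg_left
          (by rw [norm_sub_rev]; exact hdist.le) (norm_nonneg _)
  have nmid : (1 / ((k:ℝ) + 1)) * ‖η‖ < ε / 2 := by
    have hk1 : (N:ℝ) ≤ (k:ℝ) := Nat.cast_le.mpr hk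
    have hN' : 2 * ‖η‖ < ε * (N:ℝ) := by
      rw [div_lt_iff₀ hε] at hN
      linarith
    rw [one_div, inv_mul_eq_div, div_lt_div_iff₀ (by positivity) (by norm_num)]
    nlinarith
  have key : ε / (2 * (1 + ‖(1 : H →L[ℂ] H) - A'‖))
      + ‖(1 : H →L[ℂ] H) - A'‖ * (ε / (2 * (1 + ‖(1 : H →L[ℂ] H) - A'‖))) = ε / 2 :=
    aux_key (norm_nonneg _)
  calc ‖_ + _ + _‖ ≤ _ + _ + _ := norm_add₃_le
    _ < ε := by linarith
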